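/- Let (x_α)_{α<ω₁} be an injective family of real numbers indexed by the countable ordinals. Define a strict partial order ≺ on the index set by: α ≺ β if and only if α > β (as ordinals) and x_α > x_β (as real numbers). Then: (i) the resulting partially ordered set contains no infinite strictly increasing sequence; (ii) it contains no uncountable chain (no uncountable set of pairwise comparable elements); and (iii) it contains no uncountable antichain (no uncountable set of pairwise incomparable elements). -/

import Mathlib

/-- A set on which a real-valued function is strictly increasing with respect to a
well-founded linear order is countable. -/
lemma aux_countable_of_strictMonoOn {β : Type*} [LinearOrder β]
    (hwf : WellFounded ((· < ·) : β → β → Prop))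
    (f : β → ℝ) (S : Set β) (hf : ∀ a ∈ S, ∀ b ∈ S, a < b → f a < f b) :
    S.Countable := by
  have key : ∀ a ∈ S, ∃ q : ℚ, f a < (q : ℝ) ∧ ∀ b ∈ S, a < b → (q : ℝ) ≤ f b := by
    intro a ha
    by_cases h : ∃ b ∈ S, a < b
    · set T : Set β := {b | b ∈ S ∧ a < b} with hT
      have hTne : T.Nonempty := by obtain ⟨b, hb, hab⟩ := h; exact ⟨b, hb, hab⟩
      set m := hwf.min T hTne with hm
      have hmT : m ∈ T := hwf.min_mem T hTne
      obtain ⟨q, hq1, hq2⟩ := exists_rat_btwn (hf a ha m hmT.1 hmT.2)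
      refine ⟨q, hq1, fun b hb hab => ?_⟩
      have hmb : m ≤ b := by
        by_contra hlt
        push_neg at hlt
        exact hwf.not_lt_min T ⟨hb, hab⟩ hlt
      rcases eq_or_lt_of_le hmb with rfl | hlt
      · exact hq2.le
      · exact hq2.le.trans (hf m hmT.1 b hb hlt).le
    · push_neg at h
      obtain ⟨q, hq⟩ := exists_rat_gt (f a)
      exact ⟨q, hq, fun b hb hab => absurd hab (h b hb).not_gt⟩
  choose! q hq1 hq2 using key
  have hinj : Set.InjOn q S := by
    intro a ha b hb hab
    by_contra hne
    rcases lt_or_gt_of_ne hne with hlt | hlt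
    · have : (q a : ℝ) < q b := (hq2 a ha b hb hlt).trans_lt (hq1 b hb)
      exact absurd (congrArg (fun t : ℚ => (t : ℝ)) hab) this.ne
    · have : (q b : ℝ) < q a := (hq2 b hb a ha hlt).trans_lt (hq1 a ha)
      exact absurd (congrArg (fun t : ℚ => (t : ℝ)) hab) this.ne'
  exact Set.countable_of_injective_of_countable_image hinj
    ((Set.countable_coe_iff.mp inferInstance).mono (Set.image_subset_range q S))

/-- Sierpinski's example, §1. Given an injective family of reals
`(x_α)_{α < ω₁}`, the order `α ≺ β ↔ (α > β as ordinals and x_α > x_β)` has no infinite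
strictly increasing sequence, no uncountable chain and no uncountable antichain. -/
theorem statement18
    (x : {α : Ordinal // α < (Cardinal.aleph 1).ord} → ℝ)
    (hx : Function.Injective x)
    (r : {α : Ordinal // α < (Cardinal.aleph 1).ord} →
      {α : Ordinal // α < (Cardinal.aleph 1).ord} → Prop)
    (hr : ∀ a b, r a b ↔ (b.1 < a.1 ∧ x b < x a)) :
    (¬ ∃ f : ℕ → {α : Ordinal // α < (Cardinal.aleph 1).ord},
        ∀ n : ℕ, r (f n) (f (n + 1))) ∧
    (∀ C : Set {α : Ordinal // α < (Cardinal.aleph 1).ord},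
        (∀ a ∈ C, ∀ b ∈ C, a ≠ b → r a b ∨ r b a) → C.Countable) ∧
    (∀ A : Set {α : Ordinal // α < (Cardinal.aleph 1).ord},
        (∀ a ∈ A, ∀ b ∈ A, a ≠ b → ¬ r a b ∧ ¬ r b a) → A.Countable) := by
  have hwf : WellFounded ((· < ·) : {α : Ordinal // α < (Cardinal.aleph 1).ord} →
      {α : Ordinal // α < (Cardinal.aleph 1).ord} → Prop) := by
    exact (Subtype.strictMono_coe _).wellFoundedLT.wf
  refine ⟨?_, ?_, ?_⟩
  · rintro ⟨f, hf⟩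
    have hdec : ∀ n, (f (n + 1)).1 < (f n).1 := fun n => ((hr _ _).1 (hf n)).1
    exact (RelEmbedding.natGT (fun n => (f n).1) hdec).not_wellFounded
      (wellFounded_lt)
  · intro C hC
    refine aux_countable_of_strictMonoOn hwf x C (fun a ha b hb hab => ?_)
    have hne : a ≠ b := hab.ne
    rcases hC a ha b hb hne with h | h
    · exact absurd ((hr a b).1 h).1 (not_lt_of_gt (Subtype.coe_lt_coe.mpr hab))
    · exact ((hr b a).1 h).2
  · intro A hA
    refine aux_countable_of_strictMonoOn hwf (fun a => -x a) A (fun a ha b hb hab => ?_)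
    have hne : a ≠ b := hab.ne
    have h2 := (hA a ha b hb hne).2
    rw [hr] at h2
    push_neg at h2
    have hle : x b ≤ x a := h2 (Subtype.coe_lt_coe.mpr hab)
    have : x b ≠ x a := fun h => hne (hx h).symm
    simpa using lt_of_le_of_ne hle this
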